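/- Let 𝒜 and ℬ be unital C*-algebras and x_1,…,x_r ∈ 𝒜, y_1,…,y_r ∈ ℬ self-adjoint. Suppose that for all m ∈ ℕ and all self-adjoint a_0, a_1,…,a_r ∈ M_m(ℂ), the spectrum of a_0 ⊗ 1_𝒜 + Σ_i a_i ⊗ x_i contains the spectrum of a_0 ⊗ 1_ℬ + Σ_i a_i ⊗ y_i. Then for every polynomial p ∈ ℂ⟨X_1,…,X_r⟩, the spectrum of p(x_1,…,x_r) contains the spectrum of p(y_1,…,y_r). -/

import Mathlib

open Matrix

section UnitLemmas

variable {R : Type*} [Ring R]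

theorem aux_isUnit_of_left_right {a b c : R} (h1 : a * b = 1) (h2 : c * a = 1) : IsUnit a := by
  have hcb : c = b := by
    calc c = c * (a * b) := by rw [h1, mul_one]
    _ = (c * a) * b := by rw [mul_assoc]
    _ = b := by rw [h2, one_mul]
  exact ⟨⟨a, b, h1, by rw [← hcb]; exact h2⟩, rfl⟩

theorem aux_isUnit_mul_mul_iff {u M v : R} (hu : IsUnit u) (hv : IsUnit v) :
    IsUnit (u * M * v) ↔ IsUnit M := by
  obtain ⟨u, rfl⟩ := hu
  obtain ⟨v, rfl⟩ := hv
  rw [Units.isUnit_mul_units, Units.isUnit_units_mul]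

variable {n k : Type*} [Fintype n] [Fintype k] [DecidableEq n] [DecidableEq k]

theorem aux_isUnit_fromBlocks_diag {D : Matrix n n R} {E : Matrix k k R} :
    IsUnit (fromBlocks D 0 0 E) ↔ IsUnit D ∧ IsUnit E := by
  constructor
  · intro hu
    obtain ⟨W, h1, h2⟩ := isUnit_iff_exists.mp hu
    rw [← fromBlocks_toBlocks W, fromBlocks_multiply] at h1 h2
    simp only [Matrix.zero_mul, Matrix.mul_zero, add_zero, zero_add] at h1 h2
    rw [← fromBlocks_one] at h1 h2
    constructor
    · refine aux_isUnit_of_left_right (b := W.toBlocks₁₁) (c := W.toBlocks₁₁) ?_ ?_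
      · have := congrArg Matrix.toBlocks₁₁ h1
        simp only [Matrix.toBlocks_fromBlocks₁₁] at this; exact this
      · have := congrArg Matrix.toBlocks₁₁ h2
        simp only [Matrix.toBlocks_fromBlocks₁₁] at this; exact this
    · refine aux_isUnit_of_left_right (b := W.toBlocks₂₂) (c := W.toBlocks₂₂) ?_ ?_
      · have := congrArg Matrix.toBlocks₂₂ h1
        simp only [Matrix.toBlocks_fromBlocks₂₂] at this; exact this
      · have := congrArg Matrix.toBlocks₂₂ h2
        simp only [Matrix.toBlocks_fromBlocks₂₂] at this; exact this
  · rintro ⟨hD, hE⟩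
    obtain ⟨D', hD1, hD2⟩ := isUnit_iff_exists.mp hD
    obtain ⟨E', hE1, hE2⟩ := isUnit_iff_exists.mp hE
    refine isUnit_iff_exists.mpr ⟨fromBlocks D' 0 0 E', ?_, ?_⟩
    · rw [fromBlocks_multiply]
      simp only [Matrix.zero_mul, Matrix.mul_zero, add_zero, zero_add, hD1, hE1, fromBlocks_one]
    · rw [fromBlocks_multiply]
      simp only [Matrix.zero_mul, Matrix.mul_zero, add_zero, zero_add, hD2, hE2, fromBlocks_one]

theorem aux_isUnit_offdiag {M N : Matrix n n R} :
    IsUnit (fromBlocks 0 M N 0) ↔ IsUnit M ∧ IsUnit N := by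
  constructor
  · intro h
    have hsq : IsUnit (fromBlocks 0 M N 0 * fromBlocks 0 M N 0) := h.mul h
    rw [fromBlocks_multiply] at hsq
    simp only [Matrix.zero_mul, Matrix.mul_zero, add_zero, zero_add] at hsq
    obtain ⟨hMN, hNM⟩ := aux_isUnit_fromBlocks_diag.mp hsq
    obtain ⟨W, hW1, hW2⟩ := isUnit_iff_exists.mp hMN
    obtain ⟨W', hW1', hW2'⟩ := isUnit_iff_exists.mp hNM
    constructor
    · refine aux_isUnit_of_left_right (b := N * W) (c := W' * N) ?_ ?_
      · rw [← Matrix.mul_assoc]; exact hW1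
      · rw [Matrix.mul_assoc]; exact hW2'
    · refine aux_isUnit_of_left_right (b := M * W') (c := W * M) ?_ ?_
      · rw [← Matrix.mul_assoc]; exact hW1'
      · rw [Matrix.mul_assoc]; exact hW2
  · rintro ⟨hM, hN⟩
    obtain ⟨M', hM1, hM2⟩ := isUnit_iff_exists.mp hM
    obtain ⟨N', hN1, hN2⟩ := isUnit_iff_exists.mp hN
    refine isUnit_iff_exists.mpr ⟨fromBlocks 0 N' M' 0, ?_, ?_⟩
    · rw [fromBlocks_multiply]
      simp only [Matrix.zero_mul, Matrix.mul_zero, add_zero, zero_add, hM1, hN1, fromBlocks_one]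
    · rw [fromBlocks_multiply]
      simp only [Matrix.zero_mul, Matrix.mul_zero, add_zero, zero_add, hM2, hN2, fromBlocks_one]

/-- `Matrix Unit Unit R` is just `R`. -/
def aux_unitMatrixEquiv : Matrix Unit Unit R ≃+* R where
  toFun M := M () ()
  invFun c := Matrix.of fun _ _ => c
  left_inv M := by ext a b; rfl
  right_inv c := rfl
  map_add' M N := rfl
  map_mul' M N := by simp [Matrix.mul_apply]

theorem aux_isUnit_unitMatrix {M : Matrix Unit Unit R} : IsUnit M ↔ IsUnit (M () ()) := by
  constructor
  · intro h
    exact h.map (aux_unitMatrixEquiv (R := R))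
  · intro h
    have := h.map (aux_unitMatrixEquiv (R := R)).symm
    have he : (aux_unitMatrixEquiv (R := R)).symm (M () ()) = M := by
      ext a b; rfl
    rwa [he] at this

end UnitLemmas

open Matrix

noncomputable section DegPart

variable {r : ℕ}

noncomputable def auxE (r : ℕ) :
    FreeAlgebra ℂ (Fin r) ≃ₐ[ℂ] MonoidAlgebra ℂ (FreeMonoid (Fin r)) :=
  FreeAlgebra.equivMonoidAlgebraFreeMonoid

noncomputable def auxDeg (x : FreeAlgebra ℂ (Fin r)) : ℕ :=
  ∑ w ∈ (auxE r x).coeff.support, (FreeMonoid.length w - 1)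

def auxIsLin1 (x : FreeAlgebra ℂ (Fin r)) : Prop :=
  ∃ (c : ℂ) (v : Fin r → ℂ), x = algebraMap ℂ _ c + ∑ i, v i • FreeAlgebra.ι ℂ i

theorem auxIsLin1_zero : auxIsLin1 (0 : FreeAlgebra ℂ (Fin r)) :=
  ⟨0, 0, by simp⟩

theorem auxIsLin1_one : auxIsLin1 (1 : FreeAlgebra ℂ (Fin r)) :=
  ⟨1, 0, by simp⟩

theorem auxIsLin1_add {x y : FreeAlgebra ℂ (Fin r)} (hx : auxIsLin1 x) (hy : auxIsLin1 y) :
    auxIsLin1 (x + y) := by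
  obtain ⟨c, v, rfl⟩ := hx
  obtain ⟨c', v', rfl⟩ := hy
  refine ⟨c + c', v + v', ?_⟩
  rw [map_add]
  simp only [Pi.add_apply, add_smul]
  rw [Finset.sum_add_distrib]
  abel

theorem auxIsLin1_smul_one (c : ℂ) : auxIsLin1 ((c • 1 : FreeAlgebra ℂ (Fin r))) :=
  ⟨c, 0, by simp [Algebra.algebraMap_eq_smul_one]⟩

theorem auxIsLin1_smul_iota (c : ℂ) (i : Fin r) : auxIsLin1 (c • FreeAlgebra.ι ℂ i) := by
  refine ⟨0, Pi.single i c, ?_⟩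
  rw [map_zero, zero_add]
  rw [Finset.sum_eq_single i]
  · simp
  · intro j _ hj
    simp [Pi.single_eq_of_ne hj]
  · simp

theorem auxIsLin1_sum {α : Type*} {s : Finset α} {g : α → FreeAlgebra ℂ (Fin r)}
    (h : ∀ a ∈ s, auxIsLin1 (g a)) : auxIsLin1 (∑ a ∈ s, g a) :=
  Finset.sum_induction g auxIsLin1 (fun _ _ => auxIsLin1_add) auxIsLin1_zero h

theorem auxE_iota (i : Fin r) :
    auxE r (FreeAlgebra.ι ℂ i) = MonoidAlgebra.single (FreeMonoid.of i) 1 := by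
  simp [auxE, FreeAlgebra.equivMonoidAlgebraFreeMonoid]

theorem auxE_symm_single_lin1 {w : FreeMonoid (Fin r)} (hw : FreeMonoid.length w ≤ 1) (c : ℂ) :
    auxIsLin1 ((auxE r).symm (MonoidAlgebra.single w c)) := by
  have hlen_eq : FreeMonoid.length w = (FreeMonoid.toList w).length := rfl
  rcases hl : FreeMonoid.toList w with _ | ⟨i, t⟩
  · have hw1 : w = 1 := by
      have := congrArg FreeMonoid.ofList hl
      rwa [FreeMonoid.ofList_toList] at this
    subst hw1
    have h1 : (MonoidAlgebra.single (1 : FreeMonoid (Fin r)) c) =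
        c • (1 : MonoidAlgebra ℂ (FreeMonoid (Fin r))) := by
      rw [MonoidAlgebra.one_def, MonoidAlgebra.smul_single]
      simp
    rw [h1, _root_.map_smul, _root_.map_one]
    exact auxIsLin1_smul_one c
  · have ht : t = [] := by
      rw [hlen_eq, hl] at hw
      simp only [List.length_cons] at hw
      exact List.length_eq_zero_iff.mp (by omega)
    subst ht
    have hw1 : w = FreeMonoid.of i := by
      have := congrArg FreeMonoid.ofList hl
      rwa [FreeMonoid.ofList_toList] at this
    subst hw1
    have h1 : (MonoidAlgebra.single (FreeMonoid.of i) c) =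
        c • (MonoidAlgebra.single (FreeMonoid.of i) (1 : ℂ)) := by
      rw [MonoidAlgebra.smul_single]; simp
    rw [h1, _root_.map_smul, ← auxE_iota, AlgEquiv.symm_apply_apply]
    exact auxIsLin1_smul_iota c i

theorem auxDeg_zero_isLin1 {x : FreeAlgebra ℂ (Fin r)} (h : auxDeg x = 0) : auxIsLin1 x := by
  have hsupp : ∀ w ∈ (auxE r x).coeff.support, FreeMonoid.length w ≤ 1 := by
    intro w hw
    have := (Finset.sum_eq_zero_iff).mp h w hw
    omega
  have hx : x = (auxE r).symm (auxE r x) := (AlgEquiv.symm_apply_apply _ _).symm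
  rw [hx, ← MonoidAlgebra.sum_coeff_single (auxE r x), Finsupp.sum, map_sum]
  exact auxIsLin1_sum fun w hw => auxE_symm_single_lin1 (hsupp w hw) _

theorem auxDeg_split {x : FreeAlgebra ℂ (Fin r)} (h : auxDeg x ≠ 0) :
    ∃ (i : Fin r) (v x' : FreeAlgebra ℂ (Fin r)),
      x = x' + FreeAlgebra.ι ℂ i * v ∧ auxDeg x' + auxDeg v < auxDeg x := by
  classical
  have hex : ∃ w₀ ∈ (auxE r x).coeff.support, FreeMonoid.length w₀ - 1 ≠ 0 := by
    by_contra hc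
    push_neg at hc
    exact h (Finset.sum_eq_zero hc)
  obtain ⟨w₀, hw₀, hlen⟩ := hex
  have hlen2 : 2 ≤ FreeMonoid.length w₀ := by omega
  have hlen_eq : FreeMonoid.length w₀ = (FreeMonoid.toList w₀).length := rfl
  obtain ⟨i, t, hit⟩ : ∃ i t, FreeMonoid.toList w₀ = i :: t := by
    rcases hl : FreeMonoid.toList w₀ with _ | ⟨i, t⟩
    · exfalso
      rw [hlen_eq, hl] at hlen2
      simp at hlen2
    · exact ⟨i, t, rfl⟩
  set w₁ : FreeMonoid (Fin r) := FreeMonoid.ofList t with hw₁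
  have hw₀eq : w₀ = FreeMonoid.of i * w₁ := by
    have := congrArg FreeMonoid.ofList hit
    rw [FreeMonoid.ofList_toList] at this
    rw [this, FreeMonoid.ofList_cons]
  have hlw : FreeMonoid.length w₀ = FreeMonoid.length w₁ + 1 := by
    rw [hw₀eq, FreeMonoid.length_mul, FreeMonoid.length_of]; omega
  set c₀ : ℂ := (auxE r x).coeff w₀ with hc₀
  have hc₀ne : c₀ ≠ 0 := Finsupp.mem_support_iff.mp hw₀
  refine ⟨i, (auxE r).symm (MonoidAlgebra.single w₁ c₀),
    x - (auxE r).symm (MonoidAlgebra.single w₀ c₀), ?_, ?_⟩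
  · have hmul : FreeAlgebra.ι ℂ i * (auxE r).symm (MonoidAlgebra.single w₁ c₀) =
        (auxE r).symm (MonoidAlgebra.single w₀ c₀) := by
      have h1 : FreeAlgebra.ι ℂ i = (auxE r).symm (MonoidAlgebra.single (FreeMonoid.of i) 1) := by
        rw [← auxE_iota, AlgEquiv.symm_apply_apply]
      rw [h1, ← _root_.map_mul]
      congr 1
      rw [MonoidAlgebra.single_mul_single, one_mul, ← hw₀eq]
    rw [hmul]
    abel
  · have hx' : (auxE r (x - (auxE r).symm (MonoidAlgebra.single w₀ c₀))).coeff =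
        Finsupp.erase w₀ (auxE r x).coeff := by
      rw [map_sub, AlgEquiv.apply_symm_apply, MonoidAlgebra.coeff_sub, MonoidAlgebra.coeff_single,
        Finsupp.erase_eq_sub_single]
    have hdx' : auxDeg (x - (auxE r).symm (MonoidAlgebra.single w₀ c₀)) =
        ∑ w ∈ ((auxE r x).coeff.support.erase w₀), (FreeMonoid.length w - 1) := by
      rw [auxDeg, hx', Finsupp.support_erase]
    have hdx : auxDeg x =
        (FreeMonoid.length w₀ - 1) +
          ∑ w ∈ ((auxE r x).coeff.support.erase w₀), (FreeMonoid.length w - 1) :=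
      (Finset.add_sum_erase _ _ hw₀).symm
    have hdv : auxDeg ((auxE r).symm (MonoidAlgebra.single w₁ c₀)) = FreeMonoid.length w₁ - 1 := by
      rw [auxDeg, AlgEquiv.apply_symm_apply, MonoidAlgebra.coeff_single,
        Finsupp.support_single_ne_zero _ hc₀ne,
        Finset.sum_singleton]
    rw [hdx', hdv, hdx]
    omega

end DegPart
noncomputable section LinPart
open Matrix

variable {r : ℕ}

theorem auxDeg_zero' : auxDeg (0 : FreeAlgebra ℂ (Fin r)) = 0 := by
  rw [auxDeg, map_zero]
  simp

theorem auxDeg_one : auxDeg (1 : FreeAlgebra ℂ (Fin r)) = 0 := by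
  rw [auxDeg, _root_.map_one, MonoidAlgebra.one_def, MonoidAlgebra.coeff_single,
    Finsupp.support_single_ne_zero _ one_ne_zero, Finset.sum_singleton]
  simp

theorem auxDeg_iota (i : Fin r) : auxDeg (FreeAlgebra.ι ℂ i) = 0 := by
  rw [auxDeg, auxE_iota, MonoidAlgebra.coeff_single, Finsupp.support_single_ne_zero _ one_ne_zero, Finset.sum_singleton,
    FreeMonoid.length_of]

theorem auxDeg_neg (x : FreeAlgebra ℂ (Fin r)) : auxDeg (-x) = auxDeg x := by
  rw [auxDeg, auxDeg, map_neg, MonoidAlgebra.coeff_neg, Finsupp.support_neg]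

/-- The total non-linearity measure of a matrix over the free algebra. -/
noncomputable def auxMu {n : Type} [Fintype n] (Q : Matrix n n (FreeAlgebra ℂ (Fin r))) : ℕ :=
  ∑ p : n × n, auxDeg (Q p.1 p.2)

def auxLinAt (r : ℕ) (n κ : Type) [Fintype n] [DecidableEq n] [Fintype κ] [DecidableEq κ]
    (Q : Matrix n n (FreeAlgebra ℂ (Fin r))) : Prop :=
  ∃ U V U' V' : Matrix (n ⊕ κ) (n ⊕ κ) (FreeAlgebra ℂ (Fin r)),
    U * U' = 1 ∧ U' * U = 1 ∧ V * V' = 1 ∧ V' * V = 1 ∧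
    ∀ a b, auxIsLin1
      ((U * fromBlocks Q 0 0 1 * V : Matrix (n ⊕ κ) (n ⊕ κ) (FreeAlgebra ℂ (Fin r))) a b)

def auxLin {n : Type} [Fintype n] [DecidableEq n]
    (Q : Matrix n n (FreeAlgebra ℂ (Fin r))) : Prop :=
  ∃ (κ : Type) (fκ : Fintype κ) (dκ : DecidableEq κ), @auxLinAt r n κ _ _ fκ dκ Q

theorem aux_mu_zero_lin {n : Type} [Fintype n] [DecidableEq n]
    {Q : Matrix n n (FreeAlgebra ℂ (Fin r))} (h : auxMu Q = 0) : auxLin Q := by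
  refine ⟨PEmpty, inferInstance, inferInstance, 1, 1, 1, 1, ?_, ?_, ?_, ?_, ?_⟩
  · exact Matrix.one_mul 1
  · exact Matrix.one_mul 1
  · exact Matrix.one_mul 1
  · exact Matrix.one_mul 1
  · intro a b
    rw [Matrix.one_mul, Matrix.mul_one]
    rcases a with a | e
    · rcases b with b | e
      · simp only [Matrix.fromBlocks_apply₁₁]
        exact auxDeg_zero_isLin1 ((Finset.sum_eq_zero_iff.mp h (a, b) (Finset.mem_univ _)))
      · exact e.elim
    · exact e.elim

theorem aux_fromBlocks_diag_mul {α : Type*} [NonAssocSemiring α] {n κ : Type}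
    [Fintype n] [Fintype κ] [DecidableEq κ] (A B : Matrix n n α) :
    fromBlocks A 0 0 (1 : Matrix κ κ α) * fromBlocks B 0 0 1 = fromBlocks (A * B) 0 0 1 := by
  rw [fromBlocks_multiply]
  simp

theorem aux_reindex_assoc {α : Type*} [NonAssocSemiring α] {n m κ : Type}
    [DecidableEq n] [DecidableEq m] [DecidableEq κ] (A : Matrix n n α) :
    (Matrix.reindex (Equiv.sumAssoc n m κ).symm (Equiv.sumAssoc n m κ).symm)
      (fromBlocks A 0 0 (1 : Matrix (m ⊕ κ) (m ⊕ κ) α)) =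
    fromBlocks (fromBlocks A 0 0 (1 : Matrix m m α)) 0 0 (1 : Matrix κ κ α) := by
  ext a b
  rcases a with (a | u) | c <;> rcases b with (b | u') | c' <;>
    simp [Matrix.reindex_apply, Matrix.submatrix_apply, Matrix.one_apply]
noncomputable section LinAllPart
open Matrix

variable {r : ℕ}

theorem aux_lin_all (N : ℕ) :
    ∀ (n : Type) [Fintype n] [DecidableEq n] (Q : Matrix n n (FreeAlgebra ℂ (Fin r))),
      auxMu Q ≤ N → auxLin Q := by
  induction N with
  | zero =>
    intro n _ _ Q hQ
    exact aux_mu_zero_lin (Nat.le_zero.mp hQ)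
  | succ N IH =>
    intro n _ _ Q hQ
    by_cases h0 : auxMu Q ≤ N
    · exact IH n Q h0
    have hne : auxMu Q ≠ 0 := by omega
    have hex : ∃ p : n × n, auxDeg (Q p.1 p.2) ≠ 0 := by
      by_contra hc
      push_neg at hc
      exact hne (Finset.sum_eq_zero fun p _ => hc p)
    obtain ⟨⟨a₀, b₀⟩, hp⟩ := hex
    obtain ⟨i, v, x', hx, harith⟩ := auxDeg_split hp
    dsimp only at hp hx harith
    set Q' : Matrix n n (FreeAlgebra ℂ (Fin r)) :=
      Matrix.of (fun a b => if a = a₀ ∧ b = b₀ then x' else Q a b) with hQ'def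
    set bcol : Matrix n Unit (FreeAlgebra ℂ (Fin r)) :=
      Matrix.of (fun a _ => if a = a₀ then FreeAlgebra.ι ℂ i else 0) with hbdef
    set crow : Matrix Unit n (FreeAlgebra ℂ (Fin r)) :=
      Matrix.of (fun _ b => if b = b₀ then v else 0) with hcdef
    have hsplit : Q = Q' + bcol * crow := by
      ext a b
      simp only [hQ'def, hbdef, hcdef, Matrix.add_apply, Matrix.mul_apply, Matrix.of_apply,
        Finset.univ_unique, Finset.sum_singleton]
      by_cases ha : a = a₀
      · by_cases hb : b = b₀
        · subst ha; subst hb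
          simp [hx]
        · simp [ha, hb]
      · simp [ha]
    -- measure of Q'
    have hmuQ' : auxMu Q' + auxDeg (Q a₀ b₀) = auxMu Q + auxDeg x' := by
      have h1 : auxMu Q = auxDeg (Q a₀ b₀) +
          ∑ p ∈ Finset.univ.erase (a₀, b₀), auxDeg (Q p.1 p.2) := by
        unfold auxMu
        exact (Finset.add_sum_erase _ (fun p : n × n => auxDeg (Q p.1 p.2))
          (Finset.mem_univ ((a₀, b₀) : n × n))).symm
      have h2 : auxMu Q' = auxDeg x' +
          ∑ p ∈ Finset.univ.erase (a₀, b₀), auxDeg (Q' p.1 p.2) := by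
        unfold auxMu
        have := (Finset.add_sum_erase Finset.univ
          (fun p : n × n => auxDeg (Q' p.1 p.2)) (Finset.mem_univ ((a₀, b₀) : n × n))).symm
        simpa [hQ'def] using this
      have h3 : ∑ p ∈ Finset.univ.erase (a₀, b₀), auxDeg (Q' p.1 p.2)
          = ∑ p ∈ Finset.univ.erase (a₀, b₀), auxDeg (Q p.1 p.2) := by
        refine Finset.sum_congr rfl fun p hpmem => ?_
        have hne' : p ≠ (a₀, b₀) := Finset.ne_of_mem_erase hpmem
        have hcond : ¬(p.1 = a₀ ∧ p.2 = b₀) := by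
          rintro ⟨h1', h2'⟩
          exact hne' (Prod.ext h1' h2')
        simp [hQ'def, hcond]
      rw [h1, h2, h3]
      omega
    set R : Matrix (n ⊕ Unit) (n ⊕ Unit) (FreeAlgebra ℂ (Fin r)) :=
      fromBlocks Q' bcol (-crow) 1 with hRdef
    have hmuR : auxMu R = auxMu Q' + auxDeg v := by
      rw [auxMu, Fintype.sum_prod_type]
      rw [Fintype.sum_sum_type]
      simp only [hRdef, Matrix.fromBlocks_apply₁₁, Matrix.fromBlocks_apply₁₂,
        Matrix.fromBlocks_apply₂₁, Matrix.fromBlocks_apply₂₂, Fintype.sum_sum_type,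
        Fintype.sum_unique, hbdef, hcdef, Matrix.of_apply, Matrix.neg_apply,
        auxDeg_neg, apply_ite auxDeg, auxDeg_iota, auxDeg_zero', ite_self,
        Matrix.one_apply_eq, auxDeg_one, Finset.sum_const_zero, add_zero,
        Finset.sum_ite_eq', Finset.mem_univ, if_true, Finset.sum_add_distrib, zero_add]
      unfold auxMu
      rw [Fintype.sum_prod_type]
    have hmuR_le : auxMu R ≤ N := by
      have hQle : auxMu Q ≤ N + 1 := hQ
      omega
    obtain ⟨κ, fκ, dκ, U, V, U', V', hUU', hU'U, hVV', hV'V, hpencil⟩ :=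
      IH (n ⊕ Unit) R hmuR_le
    letI := fκ
    letI := dκ
    -- the elementary transformations
    set U₀ : Matrix (n ⊕ Unit) (n ⊕ Unit) (FreeAlgebra ℂ (Fin r)) :=
      fromBlocks 1 bcol 0 1 with hU₀def
    set U₀' : Matrix (n ⊕ Unit) (n ⊕ Unit) (FreeAlgebra ℂ (Fin r)) :=
      fromBlocks 1 (-bcol) 0 1 with hU₀'def
    set V₀ : Matrix (n ⊕ Unit) (n ⊕ Unit) (FreeAlgebra ℂ (Fin r)) :=
      fromBlocks 1 0 (-crow) 1 with hV₀def
    set V₀' : Matrix (n ⊕ Unit) (n ⊕ Unit) (FreeAlgebra ℂ (Fin r)) :=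
      fromBlocks 1 0 crow 1 with hV₀'def
    have hU₀inv : U₀ * U₀' = 1 := by
      rw [hU₀def, hU₀'def, fromBlocks_multiply]
      simp [fromBlocks_one]
    have hU₀inv' : U₀' * U₀ = 1 := by
      rw [hU₀def, hU₀'def, fromBlocks_multiply]
      simp [fromBlocks_one]
    have hV₀inv : V₀ * V₀' = 1 := by
      rw [hV₀def, hV₀'def, fromBlocks_multiply]
      simp [fromBlocks_one]
    have hV₀inv' : V₀' * V₀ = 1 := by
      rw [hV₀def, hV₀'def, fromBlocks_multiply]
      simp [fromBlocks_one]
    have hid : U₀ * (fromBlocks Q 0 0 (1 : Matrix Unit Unit (FreeAlgebra ℂ (Fin r)))) * V₀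
        = R := by
      have h1 : U₀ * fromBlocks Q 0 0 (1 : Matrix Unit Unit (FreeAlgebra ℂ (Fin r)))
          = fromBlocks Q bcol 0 1 := by
        rw [hU₀def, fromBlocks_multiply]
        simp
      have hQ'eq : Q * 1 + bcol * -crow = Q' := by
        rw [Matrix.mul_one, Matrix.mul_neg]
        rw [hsplit]
        abel
      rw [h1, fromBlocks_multiply, hRdef, hQ'eq]
      simp
    -- lift everything one level up
    set EQ : Matrix (n ⊕ (Unit ⊕ κ)) (n ⊕ (Unit ⊕ κ)) (FreeAlgebra ℂ (Fin r)) :=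
      fromBlocks Q 0 0 1 with hEQdef
    set ρ := Matrix.reindexAlgEquiv ℂ (FreeAlgebra ℂ (Fin r)) (Equiv.sumAssoc n Unit κ).symm
      with hρdef
    have hρEQ : ρ EQ = fromBlocks
        (fromBlocks Q 0 0 (1 : Matrix Unit Unit (FreeAlgebra ℂ (Fin r)))) 0 0
        (1 : Matrix κ κ (FreeAlgebra ℂ (Fin r))) := by
      rw [hρdef, Matrix.reindexAlgEquiv_apply, hEQdef]
      exact aux_reindex_assoc Q
    set Uh0 : Matrix ((n ⊕ Unit) ⊕ κ) ((n ⊕ Unit) ⊕ κ) (FreeAlgebra ℂ (Fin r)) :=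
      fromBlocks U₀ 0 0 1 with hUh0def
    set Uh0' : Matrix ((n ⊕ Unit) ⊕ κ) ((n ⊕ Unit) ⊕ κ) (FreeAlgebra ℂ (Fin r)) :=
      fromBlocks U₀' 0 0 1 with hUh0'def
    set Vh0 : Matrix ((n ⊕ Unit) ⊕ κ) ((n ⊕ Unit) ⊕ κ) (FreeAlgebra ℂ (Fin r)) :=
      fromBlocks V₀ 0 0 1 with hVh0def
    set Vh0' : Matrix ((n ⊕ Unit) ⊕ κ) ((n ⊕ Unit) ⊕ κ) (FreeAlgebra ℂ (Fin r)) :=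
      fromBlocks V₀' 0 0 1 with hVh0'def
    have hUhinv : Uh0 * Uh0' = 1 := by
      rw [hUh0def, hUh0'def, aux_fromBlocks_diag_mul, hU₀inv, fromBlocks_one]
    have hUhinv' : Uh0' * Uh0 = 1 := by
      rw [hUh0def, hUh0'def, aux_fromBlocks_diag_mul, hU₀inv', fromBlocks_one]
    have hVhinv : Vh0 * Vh0' = 1 := by
      rw [hVh0def, hVh0'def, aux_fromBlocks_diag_mul, hV₀inv, fromBlocks_one]
    have hVhinv' : Vh0' * Vh0 = 1 := by
      rw [hVh0def, hVh0'def, aux_fromBlocks_diag_mul, hV₀inv', fromBlocks_one]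
    have hinner : fromBlocks R 0 0 (1 : Matrix κ κ (FreeAlgebra ℂ (Fin r)))
        = Uh0 * ρ EQ * Vh0 := by
      rw [hρEQ, hUh0def, hVh0def, aux_fromBlocks_diag_mul, aux_fromBlocks_diag_mul, hid]
    refine ⟨Unit ⊕ κ, inferInstance, inferInstance,
      ρ.symm (U * Uh0), ρ.symm (Vh0 * V), ρ.symm (Uh0' * U'), ρ.symm (V' * Vh0'),
      ?_, ?_, ?_, ?_, ?_⟩
    · rw [← _root_.map_mul]
      have : (U * Uh0) * (Uh0' * U') = 1 := by
        rw [mul_assoc U Uh0, ← mul_assoc Uh0, hUhinv, one_mul, hUU']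
      rw [this, _root_.map_one]
    · rw [← _root_.map_mul]
      have : (Uh0' * U') * (U * Uh0) = 1 := by
        rw [mul_assoc Uh0', ← mul_assoc U', hU'U, one_mul, hUhinv']
      rw [this, _root_.map_one]
    · rw [← _root_.map_mul]
      have : (Vh0 * V) * (V' * Vh0') = 1 := by
        rw [mul_assoc Vh0, ← mul_assoc V, hVV', one_mul, hVhinv]
      rw [this, _root_.map_one]
    · rw [← _root_.map_mul]
      have : (V' * Vh0') * (Vh0 * V) = 1 := by
        rw [mul_assoc V', ← mul_assoc Vh0', hVhinv', one_mul, hV'V]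
      rw [this, _root_.map_one]
    · intro a b
      have key : ρ.symm (U * Uh0) * EQ * ρ.symm (Vh0 * V)
          = ρ.symm (U * fromBlocks R 0 0 (1 : Matrix κ κ (FreeAlgebra ℂ (Fin r))) * V) := by
        rw [hinner]
        have hassoc : U * (Uh0 * ρ EQ * Vh0) * V = (U * Uh0) * ρ EQ * (Vh0 * V) := by
          noncomm_ring
        rw [hassoc]
        simp only [_root_.map_mul, AlgEquiv.symm_apply_apply]
      rw [key]
      have hentry : (ρ.symm (U * fromBlocks R 0 0 (1 : Matrix κ κ (FreeAlgebra ℂ (Fin r))) * V)) a b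
          = (U * fromBlocks R 0 0 (1 : Matrix κ κ (FreeAlgebra ℂ (Fin r))) * V)
              ((Equiv.sumAssoc n Unit κ).symm a) ((Equiv.sumAssoc n Unit κ).symm b) := by
        rw [hρdef]
        simp [Matrix.reindexAlgEquiv_symm, Matrix.reindexAlgEquiv_apply, Matrix.reindex_apply,
          Matrix.submatrix_apply]
      rw [hentry]
      exact hpencil _ _
noncomputable section EvalPart
open Matrix

variable {r : ℕ}

/-- The pencil associated with matrix coefficient data. -/
def auxPencil {n : Type} (C : Type*) [Ring C] [Algebra ℂ C]
    (B₀ : Matrix n n ℂ) (Bv : Fin r → Matrix n n ℂ) (z : Fin r → C) : Matrix n n C :=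
  B₀.map (algebraMap ℂ C) + ∑ i, (Bv i).map (fun c => c • z i)

theorem auxPencil_apply {n : Type} {C : Type*} [Ring C] [Algebra ℂ C]
    (B₀ : Matrix n n ℂ) (Bv : Fin r → Matrix n n ℂ) (z : Fin r → C) (a b : n) :
    auxPencil C B₀ Bv z a b = algebraMap ℂ C (B₀ a b) + ∑ i, (Bv i a b) • z i := by
  simp [auxPencil, Matrix.add_apply, Matrix.sum_apply, Matrix.map_apply]

theorem aux_exists_coeffs {n : Type} (P : Matrix n n (FreeAlgebra ℂ (Fin r)))
    (hP : ∀ a b, auxIsLin1 (P a b)) :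
    ∃ (B₀ : Matrix n n ℂ) (Bv : Fin r → Matrix n n ℂ),
      P = auxPencil (FreeAlgebra ℂ (Fin r)) B₀ Bv (FreeAlgebra.ι ℂ) := by
  choose c v hcv using hP
  refine ⟨Matrix.of c, fun i => Matrix.of (fun a b => v a b i), ?_⟩
  ext a b
  rw [auxPencil_apply]
  simpa using hcv a b

theorem auxPencil_map {n : Type} {C : Type*} [Ring C] [Algebra ℂ C]
    (B₀ : Matrix n n ℂ) (Bv : Fin r → Matrix n n ℂ) (z : Fin r → C) :
    (auxPencil (FreeAlgebra ℂ (Fin r)) B₀ Bv (FreeAlgebra.ι ℂ)).map (FreeAlgebra.lift ℂ z)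
      = auxPencil C B₀ Bv z := by
  ext a b
  rw [Matrix.map_apply, auxPencil_apply, auxPencil_apply]
  simp only [map_add, map_sum, _root_.map_smul, FreeAlgebra.lift_ι_apply, AlgHom.commutes]

theorem auxPencil_herm {n : Type} [Fintype n] {C : Type*} [Ring C] [Algebra ℂ C]
    [StarRing C] [StarModule ℂ C]
    (B₀ : Matrix n n ℂ) (Bv : Fin r → Matrix n n ℂ) (z : Fin r → C)
    (hz : ∀ i, IsSelfAdjoint (z i)) :
    auxPencil C (fromBlocks 0 B₀ B₀ᴴ 0) (fun i => fromBlocks 0 (Bv i) (Bv i)ᴴ 0) z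
      = fromBlocks 0 (auxPencil C B₀ Bv z) (auxPencil C B₀ Bv z)ᴴ 0 := by
  ext a b
  rcases a with a | a <;> rcases b with b | b <;>
    simp only [auxPencil_apply, Matrix.fromBlocks_apply₁₁, Matrix.fromBlocks_apply₁₂,
      Matrix.fromBlocks_apply₂₁, Matrix.fromBlocks_apply₂₂, Matrix.zero_apply,
      Matrix.conjTranspose_apply, map_zero, zero_smul, Finset.sum_const_zero, add_zero]
  simp only [star_add, star_sum, star_smul, ← algebraMap_star_comm]
  congr 1
  exact Finset.sum_congr rfl fun i _ => by rw [(hz i).star_eq]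

theorem aux_herm_selfAdjoint {n : Type} (B : Matrix n n ℂ) :
    IsSelfAdjoint (fromBlocks (0 : Matrix n n ℂ) B Bᴴ (0 : Matrix n n ℂ)) := by
  show star _ = _
  rw [Matrix.star_eq_conjTranspose, Matrix.fromBlocks_conjTranspose]
  simp

theorem aux_isUnit_map_ringEquiv {C D : Type*} [Ring C] [Ring D] (e : C ≃+* D) (M : C) :
    IsUnit (e M) ↔ IsUnit M :=
  ⟨fun h => by simpa using h.map e.symm, fun h => h.map e⟩

theorem aux_isUnit_conjTranspose {n : Type} [Fintype n] [DecidableEq n] {C : Type*} [Ring C] [StarRing C]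
    {M : Matrix n n C} (h : IsUnit M) : IsUnit Mᴴ := by
  obtain ⟨W, h1, h2⟩ := isUnit_iff_exists.mp h
  refine isUnit_iff_exists.mpr ⟨Wᴴ, ?_, ?_⟩
  · rw [← Matrix.conjTranspose_mul, h2, Matrix.conjTranspose_one]
  · rw [← Matrix.conjTranspose_mul, h1, Matrix.conjTranspose_one]

theorem auxPencil_reindex {n m : Type} {C : Type*} [Ring C] [Algebra ℂ C]
    (e : n ≃ m) (B₀ : Matrix n n ℂ) (Bv : Fin r → Matrix n n ℂ) (z : Fin r → C) :
    auxPencil C (Matrix.reindex e e B₀) (fun i => Matrix.reindex e e (Bv i)) z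
      = Matrix.reindex e e (auxPencil C B₀ Bv z) := by
  ext a b
  simp only [auxPencil_apply, Matrix.reindex_apply, Matrix.submatrix_apply]

theorem aux_isSelfAdjoint_reindex {n m : Type} (e : n ≃ m) {B : Matrix n n ℂ}
    (hB : IsSelfAdjoint B) : IsSelfAdjoint (Matrix.reindex e e B) := by
  have h1 : star (Matrix.reindex e e B) = Matrix.reindex e e (star B) := by
    ext a b
    simp [Matrix.star_apply, Matrix.reindex_apply, Matrix.submatrix_apply]
  show star _ = _
  rw [h1, hB.star_eq]

theorem aux_chain {C : Type*} [Ring C] [Algebra ℂ C] {κ : Type} [Fintype κ] [DecidableEq κ]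
    (q : FreeAlgebra ℂ (Fin r)) (z : Fin r → C)
    (U V U' V' : Matrix (Unit ⊕ κ) (Unit ⊕ κ) (FreeAlgebra ℂ (Fin r)))
    (hUU' : U * U' = 1) (hU'U : U' * U = 1) (hVV' : V * V' = 1) (hV'V : V' * V = 1) :
    IsUnit ((U * fromBlocks (Matrix.of fun _ _ => q) 0 0 1 * V).map (FreeAlgebra.lift ℂ z))
      ↔ IsUnit (FreeAlgebra.lift ℂ z q) := by
  set f : FreeAlgebra ℂ (Fin r) →ₐ[ℂ] C := FreeAlgebra.lift ℂ z with hfdef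
  set Φ : Matrix (Unit ⊕ κ) (Unit ⊕ κ) (FreeAlgebra ℂ (Fin r)) →ₐ[ℂ]
      Matrix (Unit ⊕ κ) (Unit ⊕ κ) C := AlgHom.mapMatrix f with hΦdef
  have hmap : ∀ M : Matrix (Unit ⊕ κ) (Unit ⊕ κ) (FreeAlgebra ℂ (Fin r)),
      M.map f = Φ M := fun M => rfl
  rw [hmap, _root_.map_mul, _root_.map_mul]
  have hUunit : IsUnit (Φ U) := isUnit_iff_exists.mpr ⟨Φ U',
    by rw [← _root_.map_mul, hUU', _root_.map_one],
    by rw [← _root_.map_mul, hU'U, _root_.map_one]⟩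
  have hVunit : IsUnit (Φ V) := isUnit_iff_exists.mpr ⟨Φ V',
    by rw [← _root_.map_mul, hVV', _root_.map_one],
    by rw [← _root_.map_mul, hV'V, _root_.map_one]⟩
  rw [aux_isUnit_mul_mul_iff hUunit hVunit]
  have hE : Φ (fromBlocks (Matrix.of fun _ _ => q) 0 0 (1 : Matrix κ κ (FreeAlgebra ℂ (Fin r))))
      = fromBlocks ((Matrix.of fun _ _ => q).map f) 0 0 1 := by
    rw [← hmap, Matrix.fromBlocks_map]
    rw [Matrix.map_zero _ (map_zero f), Matrix.map_zero _ (map_zero f),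
      Matrix.map_one _ (map_zero f) (map_one f)]
  rw [hE, aux_isUnit_fromBlocks_diag, aux_isUnit_unitMatrix]
  simp only [Matrix.map_apply, Matrix.of_apply, isUnit_one, and_true]


theorem aux_isUnit_map_algEquiv {R C D : Type*} [CommSemiring R] [Ring C] [Ring D]
    [Algebra R C] [Algebra R D] (e : C ≃ₐ[R] D) (M : C) : IsUnit (e M) ↔ IsUnit M :=
  ⟨fun h => by simpa using h.map e.symm, fun h => h.map e⟩
end EvalPart
open Matrix in
/-- If for all `m` and all self-adjoint matrix coefficients
`a₀, a₁, …, a_r ∈ M_m(ℂ)` the spectrum of `a₀ ⊗ 1 + Σ aᵢ ⊗ xᵢ` contains that of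
`a₀ ⊗ 1 + Σ aᵢ ⊗ yᵢ`, then for every polynomial `p` in `r` non-commuting variables the
spectrum of `p(x₁,…,x_r)` contains that of `p(y₁,…,y_r)`. -/
theorem spectra_inclusion_of_linear_spectra_inclusion {A B : Type*}
    [CStarAlgebra A] [CStarAlgebra B] [StarModule ℂ A] [StarModule ℂ B]
    (r : ℕ) (x : Fin r → A) (y : Fin r → B)
    (hx : ∀ i, IsSelfAdjoint (x i)) (hy : ∀ i, IsSelfAdjoint (y i))
    (h : ∀ (m : ℕ) (a0 : Matrix (Fin m) (Fin m) ℂ) (a : Fin r → Matrix (Fin m) (Fin m) ℂ),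
      IsSelfAdjoint a0 → (∀ i, IsSelfAdjoint (a i)) →
      spectrum ℂ (a0.map (algebraMap ℂ B) + ∑ i, (a i).map fun c => c • y i) ⊆
        spectrum ℂ (a0.map (algebraMap ℂ A) + ∑ i, (a i).map fun c => c • x i)) :
    ∀ p : FreeAlgebra ℂ (Fin r),
      spectrum ℂ (FreeAlgebra.lift ℂ y p) ⊆ spectrum ℂ (FreeAlgebra.lift ℂ x p) := by
  intro p μ hμ
  by_contra hx0
  rw [spectrum.notMem_iff] at hx0
  refine absurd hμ ?_
  rw [spectrum.notMem_iff]
  -- goal: IsUnit (algebraMap ℂ B μ - lift y p)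
  set q : FreeAlgebra ℂ (Fin r) := algebraMap ℂ _ μ - p with hqdef
  have hevx : (FreeAlgebra.lift ℂ x) q = algebraMap ℂ A μ - (FreeAlgebra.lift ℂ x) p := by
    rw [hqdef, map_sub, AlgHom.commutes]
  have hevy : (FreeAlgebra.lift ℂ y) q = algebraMap ℂ B μ - (FreeAlgebra.lift ℂ y) p := by
    rw [hqdef, map_sub, AlgHom.commutes]
  obtain ⟨κ, fκ, dκ, U, V, U', V', hUU', hU'U, hVV', hV'V, hpencil⟩ :=
    aux_lin_all (auxMu ((Matrix.of fun _ _ => q) : Matrix Unit Unit (FreeAlgebra ℂ (Fin r))))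
      Unit ((Matrix.of fun _ _ => q) : Matrix Unit Unit (FreeAlgebra ℂ (Fin r))) le_rfl
  letI := fκ
  letI := dκ
  obtain ⟨B₀, Bv, hPcoeff⟩ := aux_exists_coeffs
    (U * fromBlocks (Matrix.of fun _ _ => q) 0 0 1 * V) hpencil
  -- x-side: the evaluated pencil is invertible
  have hMx : IsUnit (auxPencil A B₀ Bv x) := by
    rw [← auxPencil_map, ← hPcoeff]
    refine (aux_chain q x U V U' V' hUU' hU'U hVV' hV'V).mpr ?_
    rw [hevx]
    exact hx0
  have hx1 : IsUnit (auxPencil A (fromBlocks 0 B₀ B₀ᴴ 0)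
      (fun i => fromBlocks 0 (Bv i) (Bv i)ᴴ 0) x) := by
    rw [auxPencil_herm _ _ _ hx]
    exact aux_isUnit_offdiag.mpr ⟨hMx, aux_isUnit_conjTranspose hMx⟩
  -- transfer through the hypothesis `h`
  set T := (Unit ⊕ κ) ⊕ (Unit ⊕ κ) with hTdef
  set e : T ≃ Fin (Fintype.card T) := Fintype.equivFin T with hedef
  set C₀ : Matrix T T ℂ := fromBlocks 0 B₀ B₀ᴴ 0 with hC₀def
  set Cv : Fin r → Matrix T T ℂ := fun i => fromBlocks 0 (Bv i) (Bv i)ᴴ 0 with hCvdef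
  have hsub := h (Fintype.card T) (Matrix.reindex e e C₀) (fun i => Matrix.reindex e e (Cv i))
    (aux_isSelfAdjoint_reindex e (aux_herm_selfAdjoint B₀))
    (fun i => aux_isSelfAdjoint_reindex e (aux_herm_selfAdjoint (Bv i)))
  have hAeq : (Matrix.reindex e e C₀).map (algebraMap ℂ A)
      + ∑ i, (Matrix.reindex e e (Cv i)).map (fun c => c • x i)
      = Matrix.reindex e e (auxPencil A C₀ Cv x) := by
    rw [← auxPencil_reindex]
    rfl
  have hBeq : (Matrix.reindex e e C₀).map (algebraMap ℂ B)
      + ∑ i, (Matrix.reindex e e (Cv i)).map (fun c => c • y i)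
      = Matrix.reindex e e (auxPencil B C₀ Cv y) := by
    rw [← auxPencil_reindex]
    rfl
  rw [hAeq, hBeq] at hsub
  have hy1 : IsUnit (auxPencil B C₀ Cv y) := by
    have hxr : IsUnit (Matrix.reindex e e (auxPencil A C₀ Cv x)) := by
      rw [← Matrix.reindexAlgEquiv_apply ℂ A e]
      exact (aux_isUnit_map_algEquiv (Matrix.reindexAlgEquiv ℂ A e) _).mpr hx1
    have h0A : (0 : ℂ) ∉ spectrum ℂ (Matrix.reindex e e (auxPencil A C₀ Cv x)) :=
      (spectrum.zero_notMem_iff ℂ).mpr hxr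
    have h0B : (0 : ℂ) ∉ spectrum ℂ (Matrix.reindex e e (auxPencil B C₀ Cv y)) :=
      fun hc => h0A (hsub hc)
    have hyr : IsUnit (Matrix.reindex e e (auxPencil B C₀ Cv y)) :=
      (spectrum.zero_notMem_iff ℂ).mp h0B
    have hyr' : IsUnit ((Matrix.reindexAlgEquiv ℂ B e) (auxPencil B C₀ Cv y)) := by
      rw [Matrix.reindexAlgEquiv_apply]
      exact hyr
    exact (aux_isUnit_map_algEquiv (Matrix.reindexAlgEquiv ℂ B e) _).mp hyr'
  -- y-side: back down the chain
  rw [hC₀def, hCvdef, auxPencil_herm _ _ _ hy] at hy1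
  have hMy : IsUnit (auxPencil B B₀ Bv y) := (aux_isUnit_offdiag.mp hy1).1
  rw [← auxPencil_map, ← hPcoeff] at hMy
  have hfin := (aux_chain q y U V U' V' hUU' hU'U hVV' hV'V).mp hMy
  rwa [hevy] at hfin
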